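/- Let f : ℝ → ℝ be analytic with power series f(t) = Σ_{m=0}^∞ a_m t^m having a_m ≥ 0 for all m and radius of convergence R > 0. Then k(x,y) = f(⟨x,y⟩) is a positive semidefinite kernel on the set {x ∈ ℝⁿ : ‖x‖² < R}: every Gram matrix (k(x_i,x_j)) is positive semidefinite. -/

import Mathlib

lemma pow_psd (n M m : ℕ) (xs : Fin M → EuclideanSpace ℝ (Fin n)) (c : Fin M → ℝ) :
    0 ≤ ∑ i, ∑ j, c i * c j * (inner ℝ (xs i) (xs j) : ℝ) ^ m := by
  have hinner : ∀ i j, (inner ℝ (xs i) (xs j) : ℝ) = ∑ k, xs i k * xs j k := by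
    intro i j
    simp [PiLp.inner_apply, RCLike.inner_apply, mul_comm]
  have key : ∀ i j, (inner ℝ (xs i) (xs j) : ℝ) ^ m
      = ∑ α : Fin m → Fin n, (∏ t, xs i (α t)) * ∏ t, xs j (α t) := by
    intro i j
    rw [hinner, Fintype.sum_pow]
    exact Finset.sum_congr rfl fun α _ => by rw [Finset.prod_mul_distrib]
  calc (0:ℝ) ≤ ∑ α : Fin m → Fin n, (∑ i, c i * ∏ t, xs i (α t)) ^ 2 :=
        Finset.sum_nonneg fun α _ => sq_nonneg _
    _ = ∑ i, ∑ j, c i * c j * (inner ℝ (xs i) (xs j) : ℝ) ^ m := by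
        simp_rw [key, sq, Finset.sum_mul_sum, Finset.mul_sum]
        rw [Finset.sum_comm]
        refine Finset.sum_congr rfl fun i _ => ?_
        rw [Finset.sum_comm]
        refine Finset.sum_congr rfl fun j _ => Finset.sum_congr rfl fun α _ => by ring

/-- A Taylor-type kernel `k(x,y) = f(⟨x,y⟩)` with `f` given by a power series with
nonnegative coefficients and radius of convergence `R > 0` is positive semidefinite on
`{x : ‖x‖² < R}`. -/
theorem stmt9 (n : ℕ) (f : ℝ → ℝ) (a : ℕ → ℝ) (R : ℝ) (hR : 0 < R)
    (ha : ∀ m, 0 ≤ a m)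
    (hf : ∀ t : ℝ, |t| < R → HasSum (fun m : ℕ => a m * t ^ m) (f t))
    (M : ℕ) (xs : Fin M → EuclideanSpace ℝ (Fin n)) (hxs : ∀ i, ‖xs i‖ ^ 2 < R)
    (c : Fin M → ℝ) :
    0 ≤ ∑ i, ∑ j, c i * c j * f (inner ℝ (xs i) (xs j) : ℝ) := by
  have hlt : ∀ i j : Fin M, |(inner ℝ (xs i) (xs j) : ℝ)| < R := by
    intro i j
    have h1 := abs_real_inner_le_norm (xs i) (xs j)
    have h2 : ‖xs i‖ * ‖xs j‖ < R := by
      nlinarith [hxs i, hxs j, norm_nonneg (xs i), norm_nonneg (xs j)]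
    linarith
  have hs : HasSum (fun m : ℕ => ∑ i, ∑ j, c i * c j * (a m * (inner ℝ (xs i) (xs j) : ℝ) ^ m))
      (∑ i, ∑ j, c i * c j * f (inner ℝ (xs i) (xs j) : ℝ)) := by
    refine hasSum_sum fun i _ => hasSum_sum fun j _ => ?_
    exact (hf _ (hlt i j)).mul_left _
  refine hs.nonneg fun m => ?_
  have : ∑ i, ∑ j, c i * c j * (a m * (inner ℝ (xs i) (xs j) : ℝ) ^ m)
      = a m * ∑ i, ∑ j, c i * c j * (inner ℝ (xs i) (xs j) : ℝ) ^ m := by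
    simp_rw [Finset.mul_sum]
    exact Finset.sum_congr rfl fun i _ => Finset.sum_congr rfl fun j _ => by ring
  rw [this]
  exact mul_nonneg (ha m) (pow_psd n M m xs c)
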